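/- Let H be a separable complex Hilbert space, C a conjugation on H, and T a C-normal bounded linear operator with Cartesian decomposition T = A + iB, where A = (T + CT*C)/2 is C-symmetric and B = (T − CT*C)/(2i) is C-skew-symmetric. With |X| = (X*X)^{1/2}, the following Loewner-order inequalities hold: (1/√2)·(|A| + |B|) ≤ |T| ≤ |A| + |B|, and moreover |T|² = |A|² + |B|² with |A| |B| = |B| |A|. -/

import Mathlib

open scoped InnerProductSpace
open ContinuousLinearMap TopologicalSpace

/-- A conjugation on a complex Hilbert space: an anti-linear, involutive map
satisfying `⟪C x, C y⟫ = ⟪y, x⟫`. -/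
def Conjugation {K : Type*} [NormedAddCommGroup K] [InnerProductSpace ℂ K] (C : K → K) : Prop :=
  (∀ (a : ℂ) (x y : K), C (a • x + y) = (starRingEnd ℂ) a • C x + C y) ∧
  (∀ x, C (C x) = x) ∧
  (∀ x y : K, ⟪C x, C y⟫_ℂ = ⟪y, x⟫_ℂ)

/-- `T` is `C`-normal: `C T*T C = T T*` (pointwise). -/
def CNormal {K : Type*} [NormedAddCommGroup K] [InnerProductSpace ℂ K] [CompleteSpace K]
    (C : K → K) (T : K →L[ℂ] K) : Prop :=
  ∀ x, C (adjoint T (T (C x))) = T (adjoint T x)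


open scoped ContinuousFunctionalCalculus in
lemma commute_cfc_real {𝓐 : Type*} [CStarAlgebra 𝓐] {a b : 𝓐} (ha : IsSelfAdjoint a)
    (hb : Commute b a) (f : ℝ → ℝ) : Commute b (cfc f a) := by
  have hclosed : IsClosed {x : 𝓐 | b * x = x * b} :=
    isClosed_eq (continuous_const.mul continuous_id) (continuous_id.mul continuous_const)
  by_cases hf : ContinuousOn f (spectrum ℝ a)
  · rw [cfc_apply f a ha hf]
    induction (⟨_, hf.restrict⟩ : C(spectrum ℝ a, ℝ)) using
        ContinuousMap.induction_on_of_compact with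
    | const r =>
      have h : (ContinuousMap.const (spectrum ℝ a) r) = algebraMap ℝ C(spectrum ℝ a, ℝ) r := rfl
      rw [h, AlgHomClass.commutes]
      exact ((Algebra.commutes r b).symm : _)
    | id => rw [cfcHom_id ha]; exact hb
    | star_id => rw [map_star, cfcHom_id ha, ha.star_eq]; exact hb
    | add f g hf' hg' => rw [map_add]; exact hf'.add_right hg'
    | mul f g hf' hg' => rw [map_mul]; exact hf'.mul_right hg'
    | frequently g hg =>
      have h1 : g ∈ closure {g' | Commute b (cfcHom ha g')} := mem_closure_iff_frequently.mpr hg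
      have h2 : IsClosed {g' : C(spectrum ℝ a, ℝ) | Commute b (cfcHom ha g')} :=
        hclosed.preimage (cfcHom_continuous ha)
      exact h2.closure_subset h1
  · rw [cfc_apply_of_not_continuousOn a hf]
    exact Commute.zero_right b

lemma commute_sqrt {𝓐 : Type*} [CStarAlgebra 𝓐] [PartialOrder 𝓐] [StarOrderedRing 𝓐] {a b : 𝓐} (ha : 0 ≤ a)
    (hb : Commute b a) : Commute b (CFC.sqrt a) := by
  rw [CFC.sqrt_eq_cfc, cfc_nnreal_eq_real _ _ ha]
  exact commute_cfc_real (.of_nonneg ha) hb _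

lemma commute_negPart {𝓐 : Type*} [CStarAlgebra 𝓐] [PartialOrder 𝓐] [StarOrderedRing 𝓐]
    {a b : 𝓐} (ha : IsSelfAdjoint a)
    (hb : Commute b a) : Commute b (a⁻) := by
  rw [CFC.negPart_def, cfcₙ_eq_cfc]
  exact commute_cfc_real ha hb _

lemma mul_nonneg_of_commute {𝓐 : Type*} [CStarAlgebra 𝓐] [PartialOrder 𝓐] [StarOrderedRing 𝓐]
    {a b : 𝓐} (ha : 0 ≤ a) (hb : 0 ≤ b) (hab : Commute a b) : 0 ≤ a * b := by
  have hs : Commute b (CFC.sqrt a) := commute_sqrt ha hab.symm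
  have h1 : a * b = star (CFC.sqrt a) * b * CFC.sqrt a := by
    rw [(IsSelfAdjoint.of_nonneg (CFC.sqrt_nonneg _)).star_eq]
    calc a * b = CFC.sqrt a * CFC.sqrt a * b := by rw [CFC.sqrt_mul_sqrt_self a ha]
      _ = CFC.sqrt a * (b * CFC.sqrt a) := by rw [mul_assoc, hs.eq]
      _ = CFC.sqrt a * b * CFC.sqrt a := by rw [mul_assoc]
  rw [h1]
  exact star_left_conjugate_nonneg hb _

lemma le_of_sq_le_sq' {𝓐 : Type*} [CStarAlgebra 𝓐] [PartialOrder 𝓐] [StarOrderedRing 𝓐]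
    {x y : 𝓐} (hx : 0 ≤ x) (hy : 0 ≤ y)
    (hxy : Commute x y) (hsq : x * x ≤ y * y) : x ≤ y := by
  set d := y - x with hd_def
  have hd : IsSelfAdjoint d := (IsSelfAdjoint.of_nonneg hy).sub (IsSelfAdjoint.of_nonneg hx)
  set n := d⁻ with hn_def
  have hn0 : (0 : 𝓐) ≤ n := CFC.negPart_nonneg d
  have hns : star n = n := (IsSelfAdjoint.of_nonneg hn0).star_eq
  have hcxd : Commute x d := (hxy.sub_right (Commute.refl x))
  have hcyd : Commute y d := ((Commute.refl y).sub_right hxy.symm)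
  have hxn : Commute x n := commute_negPart hd hcxd
  have hyn : Commute y n := commute_negPart hd hcyd
  have hdcn : Commute d n := commute_negPart hd (Commute.refl d)
  have hdn : d * n = -(n * n) := by
    conv_lhs => rw [← CFC.posPart_sub_negPart d hd]
    rw [sub_mul, CFC.posPart_mul_negPart, zero_sub]
  have hnn0 : (0 : 𝓐) ≤ n * n := by simpa [hns] using star_mul_self_nonneg n
  have hn3 : (0 : 𝓐) ≤ n * n * n :=
    mul_nonneg_of_commute hnn0 hn0 ((Commute.refl n).mul_left (Commute.refl n))
  have c1 : Commute (y + x) n := hyn.add_left hxn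
  have key0 : (0 : 𝓐) ≤ -((y + x) * (n * n * n)) := by
    have h0 : (0 : 𝓐) ≤ n * (y * y - x * x) * n := by
      have h := star_left_conjugate_nonneg (sub_nonneg.mpr hsq) n
      rwa [hns] at h
    have e2 : y * y - x * x = (y + x) * d := by
      rw [hd_def, mul_sub, add_mul, add_mul, hxy.eq]
      abel
    have e1 : n * (y * y - x * x) * n = -((y + x) * (n * n * n)) := by
      rw [e2]
      calc n * ((y + x) * d) * n = (y + x) * (d * n) * n := by
            rw [← mul_assoc n (y + x) d, ← c1.eq, mul_assoc (y + x) n d, ← hdcn.eq]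
        _ = (y + x) * (-(n * n)) * n := by rw [hdn]
        _ = -((y + x) * (n * n * n)) := by noncomm_ring
    rw [← e1]
    exact h0
  have hyn3 : (0 : 𝓐) ≤ y * (n * n * n) :=
    mul_nonneg_of_commute hy hn3 ((hyn.mul_right hyn).mul_right hyn)
  have hxn3 : (0 : 𝓐) ≤ x * (n * n * n) :=
    mul_nonneg_of_commute hx hn3 ((hxn.mul_right hxn).mul_right hxn)
  have hsum : (y + x) * (n * n * n) = 0 :=
    le_antisymm (neg_nonneg.mp key0) (by rw [add_mul]; exact add_nonneg hyn3 hxn3)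
  rw [add_mul] at hsum
  obtain ⟨hyz, hxz⟩ := (add_eq_zero_iff_of_nonneg hyn3 hxn3).mp hsum
  have hdz : d * (n * n * n) = 0 := by rw [hd_def, sub_mul, hyz, hxz, sub_zero]
  have hn4 : n * n * (n * n) = 0 := by
    have h : d * (n * n * n) = -(n * n * (n * n)) := by
      rw [show n * n * n = n * (n * n) from mul_assoc n n n, ← mul_assoc d n (n * n), hdn,
        neg_mul]
    rw [hdz] at h
    exact neg_eq_zero.mp h.symm
  have hnz : n = 0 := by
    have e : ‖n * n‖ = ‖n‖ * ‖n‖ := by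
      calc ‖n * n‖ = ‖star n * n‖ := by rw [hns]
        _ = ‖n‖ * ‖n‖ := CStarRing.norm_star_mul_self
    have e2 : ‖n * n * (n * n)‖ = ‖n * n‖ * ‖n * n‖ := by
      conv_lhs => rw [show n * n * (n * n) = star (n * n) * (n * n) by
        rw [star_mul, hns]]
      exact CStarRing.norm_star_mul_self (x := n * n)
    rw [hn4, norm_zero, e] at e2
    exact norm_eq_zero.mp (mul_self_eq_zero.mp (mul_self_eq_zero.mp e2.symm))
  have hd0 : (0 : 𝓐) ≤ d := (CFC.negPart_eq_zero_iff d hd).mp (hn_def ▸ hnz)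
  exact sub_nonneg.mp hd0

open ContinuousLinearMap in
lemma isPositive_smul_real {H : Type*} [NormedAddCommGroup H] [InnerProductSpace ℂ H]
    [CompleteSpace H] {f : H →L[ℂ] H} (hf : f.IsPositive) {r : ℝ} (hr : 0 ≤ r) :
    (r • f).IsPositive := by
  constructor
  · have h1 : star (r • f) = r • f := by
      rw [star_smul, star_trivial, hf.isSelfAdjoint.star_eq]
    exact isSelfAdjoint_iff_isSymmetric.mp h1
  · intro x
    have h : (r • f).reApplyInnerSelf x = r * f.reApplyInnerSelf x := by
      simp only [ContinuousLinearMap.reApplyInnerSelf, ContinuousLinearMap.smul_apply]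
      rw [RCLike.real_smul_eq_coe_smul (K := ℂ), inner_smul_left, RCLike.conj_ofReal]
      simp [RCLike.re_ofReal_mul]
    rw [h]
    exact mul_nonneg hr (hf.2 x)

lemma comm_aux {R : Type*} [Ring R] {p x : R} (h : Commute x p) :
    (p + x) * (p - x) = (p - x) * (p + x) := by
  simp only [mul_sub, sub_mul, mul_add, add_mul, h.eq]
  abel


set_option maxHeartbeats 1000000 in
/-- Singular-value/Loewner inequalities for the Cartesian decomposition `T = A + iB` of a
`C`-normal operator: with `PA = |A|`, `PB = |B|`, `PT = |T|` the positive square roots,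
`(1/√2)(|A| + |B|) ≤ |T| ≤ |A| + |B|`, `|T|² = |A|² + |B|²`, and `|A||B| = |B||A|`. -/
theorem stmt_15 {H : Type*} [NormedAddCommGroup H] [InnerProductSpace ℂ H] [CompleteSpace H]
    [SeparableSpace H]
    (C : H → H) (hC : Conjugation C)
    (T A B : H →L[ℂ] H) (hT : CNormal C T)
    (hA : ∀ x, A x = (2 : ℂ)⁻¹ • (T x + C (adjoint T (C x))))
    (hB : ∀ x, B x = (2 * Complex.I)⁻¹ • (T x - C (adjoint T (C x))))
    (PA PB PT : H →L[ℂ] H)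
    (hPA : PA.IsPositive) (hPB : PB.IsPositive) (hPT : PT.IsPositive)
    (hPA2 : PA * PA = adjoint A * A) (hPB2 : PB * PB = adjoint B * B)
    (hPT2 : PT * PT = adjoint T * T) :
    (PT - (Real.sqrt 2)⁻¹ • (PA + PB)).IsPositive ∧
    ((PA + PB) - PT).IsPositive ∧
    PT * PT = PA * PA + PB * PB ∧
    PA * PB = PB * PA := by
  obtain ⟨hC1, hC2, hC3⟩ := hC
  -- the operator S = C T* C
  set S : H →L[ℂ] H := (2 : ℂ) • A - T with hSdef
  have hS : ∀ x, S x = C (adjoint T (C x)) := by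
    intro x
    rw [hSdef, ContinuousLinearMap.sub_apply, ContinuousLinearMap.smul_apply, hA x, smul_smul]
    norm_num
  have hSadj : ∀ x, adjoint S x = C (T (C x)) := by
    intro x
    refine ext_inner_left ℂ fun y => ?_
    rw [adjoint_inner_right]
    calc ⟪S y, x⟫_ℂ = ⟪C (adjoint T (C y)), C (C x)⟫_ℂ := by rw [hS y, hC2 x]
      _ = ⟪C x, adjoint T (C y)⟫_ℂ := hC3 _ _
      _ = ⟪T (C x), C y⟫_ℂ := adjoint_inner_right _ _ _
      _ = ⟪C (C (T (C x))), C y⟫_ℂ := by rw [hC2]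
      _ = ⟪y, C (T (C x))⟫_ℂ := hC3 _ _
  have h1 : S * adjoint S = T * adjoint T := by
    ext x
    simp only [ContinuousLinearMap.mul_apply]
    rw [hSadj x, hS _, hC2]
    exact hT x
  have h2 : adjoint S * S = adjoint T * T := by
    ext x
    simp only [ContinuousLinearMap.mul_apply]
    rw [hS x, hSadj _, hC2]
    have h := hT (C x)
    rw [hC2] at h
    have h' := congrArg C h
    rw [hC2] at h'
    exact h'.symm
  simp only [← star_eq_adjoint] at h1 h2 hPA2 hPB2 hPT2
  have hAeq : A = (2 : ℂ)⁻¹ • (T + S) := by rw [hSdef]; module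
  have hBeq : B = (2 * Complex.I)⁻¹ • (T - S) := by
    ext x
    rw [hB x]
    simp [hS x]
  -- scalar computations
  have cc : star ((2 : ℂ)⁻¹) * (2 : ℂ)⁻¹ = (4 : ℂ)⁻¹ := by
    rw [Complex.star_def]
    simp [map_inv₀, map_ofNat]
    norm_num
  have cc2 : star ((2 * Complex.I)⁻¹) * (2 * Complex.I)⁻¹ = (4 : ℂ)⁻¹ := by
    rw [Complex.star_def, mul_inv, Complex.inv_I, map_mul, map_inv₀, map_ofNat, map_neg,
      Complex.conj_I]
    ring_nf
    rw [Complex.I_sq]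
    norm_num
  have eA : star A * A = (4 : ℂ)⁻¹ • ((star T + star S) * (T + S)) := by
    rw [hAeq, star_smul, star_add, smul_mul_smul_comm, cc]
  have eB : star B * B = (4 : ℂ)⁻¹ • ((star T - star S) * (T - S)) := by
    rw [hBeq, star_smul, star_sub, smul_mul_smul_comm, cc2]
  have exp1 : (star T + star S) * (T + S)
      = star T * T + star S * S + (star T * S + star S * T) := by noncomm_ring
  have exp2 : (star T - star S) * (T - S)
      = star T * T + star S * S - (star T * S + star S * T) := by noncomm_ring
  have E1 : star A * A + star B * B = star T * T := by
    rw [eA, eB, exp1, exp2, h2]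
    match_scalars <;> norm_num
  have third : PT * PT = PA * PA + PB * PB := by
    rw [hPT2, hPA2, hPB2]
    exact E1.symm
  -- commutation
  have hXN : (star T * S + star S * T) * (star T * T)
      = (star T * T) * (star T * S + star S * T) := by
    have k1 : star T * T * (star T * S) = star T * S * (star T * T) := by
      calc star T * T * (star T * S) = star T * (T * star T) * S := by noncomm_ring
        _ = star T * (S * star S) * S := by rw [h1]
        _ = star T * S * (star S * S) := by noncomm_ring
        _ = star T * S * (star T * T) := by rw [h2]
    have k2 : star T * T * (star S * T) = star S * T * (star T * T) := by
      calc star T * T * (star S * T) = star S * S * (star S * T) := by rw [h2]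
        _ = star S * (S * star S) * T := by noncomm_ring
        _ = star S * (T * star T) * T := by rw [h1]
        _ = star S * T * (star T * T) := by noncomm_ring
    calc (star T * S + star S * T) * (star T * T)
        = star T * S * (star T * T) + star S * T * (star T * T) := by rw [add_mul]
      _ = star T * T * (star T * S) + star T * T * (star S * T) := by rw [k1, k2]
      _ = (star T * T) * (star T * S + star S * T) := by rw [mul_add]
  have E2 : (star A * A) * (star B * B) = (star B * B) * (star A * A) := by
    rw [eA, eB, exp1, exp2, h2, smul_mul_smul_comm, smul_mul_smul_comm]
    congr 1
    have cXN : Commute (star T * S + star S * T) (star T * T) := hXN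
    exact comm_aux (cXN.add_right cXN)
  -- positivity in the Loewner order
  have hPA0 : (0 : H →L[ℂ] H) ≤ PA := (nonneg_iff_isPositive PA).mpr hPA
  have hPB0 : (0 : H →L[ℂ] H) ≤ PB := (nonneg_iff_isPositive PB).mpr hPB
  have hPT0 : (0 : H →L[ℂ] H) ≤ PT := (nonneg_iff_isPositive PT).mpr hPT
  have hPAsq0 : (0 : H →L[ℂ] H) ≤ PA * PA := by
    have h := star_mul_self_nonneg PA
    rwa [hPA.isSelfAdjoint.star_eq] at h
  have hPBsq0 : (0 : H →L[ℂ] H) ≤ PB * PB := by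
    have h := star_mul_self_nonneg PB
    rwa [hPB.isSelfAdjoint.star_eq] at h
  have hc2 : Commute (PA * PA) (PB * PB) := by rw [hPA2, hPB2]; exact E2
  have cBBA : Commute (PB * PB) PA := by
    have h := commute_sqrt hPAsq0 hc2.symm
    rwa [CFC.sqrt_mul_self PA hPA0] at h
  have cAB : Commute PA PB := by
    have h := commute_sqrt hPBsq0 cBBA.symm
    rwa [CFC.sqrt_mul_self PB hPB0] at h
  -- PT commutes with PA and PB
  have cAPT : Commute PA PT := by
    have hc : Commute PA (PT * PT) := by
      rw [third]
      exact ((Commute.refl PA).mul_right (Commute.refl PA)).add_right (cAB.mul_right cAB)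
    have hPTsq0 : (0 : H →L[ℂ] H) ≤ PT * PT := by
      have h := star_mul_self_nonneg PT
      rwa [hPT.isSelfAdjoint.star_eq] at h
    have h := commute_sqrt hPTsq0 hc
    rwa [CFC.sqrt_mul_self PT hPT0] at h
  have cBPT : Commute PB PT := by
    have hc : Commute PB (PT * PT) := by
      rw [third]
      exact (cAB.symm.mul_right cAB.symm).add_right ((Commute.refl PB).mul_right (Commute.refl PB))
    have hPTsq0 : (0 : H →L[ℂ] H) ≤ PT * PT := by
      have h := star_mul_self_nonneg PT
      rwa [hPT.isSelfAdjoint.star_eq] at h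
    have h := commute_sqrt hPTsq0 hc
    rwa [CFC.sqrt_mul_self PT hPT0] at h
  -- second inequality : PT ≤ PA + PB
  have hineq2 : PT ≤ PA + PB := by
    refine le_of_sq_le_sq' hPT0 (add_nonneg hPA0 hPB0) (cAPT.symm.add_right cBPT.symm) ?_
    have hWn : (0 : H →L[ℂ] H) ≤ PA * PB + PB * PA :=
      add_nonneg (mul_nonneg_of_commute hPA0 hPB0 cAB) (mul_nonneg_of_commute hPB0 hPA0 cAB.symm)
    have e : (PA + PB) * (PA + PB) = PT * PT + (PA * PB + PB * PA) := by
      rw [third]; noncomm_ring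
    rw [e]
    exact le_add_of_nonneg_right hWn
  -- first inequality : PA + PB ≤ √2 • PT
  have hdsa : IsSelfAdjoint (PA - PB) := hPA.isSelfAdjoint.sub hPB.isSelfAdjoint
  have hdd0 : (0 : H →L[ℂ] H) ≤ (PA - PB) * (PA - PB) := by
    have h := star_mul_self_nonneg (PA - PB)
    rwa [hdsa.star_eq] at h
  have esq : (Real.sqrt 2 • PT) * (Real.sqrt 2 • PT)
      = (PA + PB) * (PA + PB) + (PA - PB) * (PA - PB) := by
    rw [smul_mul_smul_comm, Real.mul_self_sqrt (by norm_num : (0:ℝ) ≤ 2), third, two_smul]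
    noncomm_ring
  have hineq1 : PA + PB ≤ Real.sqrt 2 • PT := by
    refine le_of_sq_le_sq' (add_nonneg hPA0 hPB0)
      ((nonneg_iff_isPositive _).mpr (isPositive_smul_real hPT (Real.sqrt_nonneg 2)))
      ((cAPT.symm.add_right cBPT.symm).symm.smul_right _) ?_
    rw [esq]
    exact le_add_of_nonneg_right hdd0
  refine ⟨?_, ?_, third, cAB.eq⟩
  · have e : PT - (Real.sqrt 2)⁻¹ • (PA + PB)
        = (Real.sqrt 2)⁻¹ • (Real.sqrt 2 • PT - (PA + PB)) := by
      rw [smul_sub, smul_smul, inv_mul_cancel₀ (ne_of_gt (Real.sqrt_pos.mpr two_pos)), one_smul]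
    rw [e]
    exact isPositive_smul_real ((le_def _ _).mp hineq1) (inv_nonneg.mpr (Real.sqrt_nonneg 2))
  · exact (le_def _ _).mp hineq2
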